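/- Let R be a split-F-regular integral domain of characteristic p > 0 and let R ↪ T be a module-finite ring extension. Then the inclusion R ↪ T splits as a map of R-modules (R is a splinter). -/

import Mathlib

/-- `R` is split-F-regular: for every nonzero `c ∈ R` there exist `e > 0` and an `R`-linear
map `F^e_* R → R` sending `F^e_* c` to `1`, encoded as an additive map `φ : R → R` with
`φ (a ^ p ^ e * b) = a * φ b` and `φ c = 1`. -/
def SplitFRegular (R : Type*) [CommRing R] (p : ℕ) : Prop :=
  ∀ c : R, c ≠ 0 → ∃ e : ℕ, 0 < e ∧ ∃ φ : R →+ R,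
    (∀ a b : R, φ (a ^ p ^ e * b) = a * φ b) ∧ φ c = 1

/-- A split-F-regular domain is a splinter: every module-finite ring extension `R ↪ T`
splits as a map of `R`-modules. -/
theorem splitFRegular_splinter (R T : Type*) [CommRing R] [IsDomain R] (p : ℕ)
    [Fact p.Prime] [CharP R p] (h : SplitFRegular R p)
    [CommRing T] [IsDomain T] [Algebra R T] (hinj : Function.Injective (algebraMap R T))
    [Module.Finite R T] :
    ∃ φ : T →ₗ[R] R, φ 1 = 1 := by
  classical
  haveI : CharP T p := charP_of_injective_algebraMap hinj p
  -- Step 1: produce a nonzero R-linear map ψ : T →ₗ[R] R with ψ 1 ≠ 0.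
  let K := FractionRing R
  let M := LocalizedModule (nonZeroDivisors R) T
  let ι : T →ₗ[R] M := LocalizedModule.mkLinearMap (nonZeroDivisors R) T
  have hv : ι (1 : T) ≠ 0 := by
    intro hzero
    have h0 : (0 : M) = LocalizedModule.mk 0 1 := (LocalizedModule.zero_mk 1).symm
    rw [show ι (1:T) = LocalizedModule.mk 1 1 from rfl, h0, LocalizedModule.mk_eq] at hzero
    obtain ⟨u, hu⟩ := hzero
    simp only [one_smul, smul_zero, Submonoid.smul_def] at hu
    have : algebraMap R T u = 0 := by
      rw [Algebra.algebraMap_eq_smul_one, hu]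
    have hu0 : (u : R) = 0 := by
      apply hinj; rw [this, map_zero]
    exact nonZeroDivisors.coe_ne_zero u hu0
  obtain ⟨f, hf⟩ : ∃ f : Module.Dual K M, f (ι 1) ≠ 0 := by
    by_contra hcon
    push_neg at hcon
    exact hv ((Module.forall_dual_apply_eq_zero_iff K _).mp hcon)
  let g : T →ₗ[R] K := (f.restrictScalars R).comp ι
  obtain ⟨s, hs⟩ := Module.Finite.fg_top (R := R) (M := T)
  obtain ⟨d, hd⟩ := IsLocalization.exist_integer_multiples (nonZeroDivisors R) s (fun t : T => g t)
  let g' : T →ₗ[R] K := (d : R) • g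
  have hint : ∀ t : T, g' t ∈ LinearMap.range (Algebra.linearMap R K) := by
    have : (⊤ : Submodule R T) ≤ (LinearMap.range (Algebra.linearMap R K)).comap g' := by
      rw [← hs, Submodule.span_le]
      intro t ht
      obtain ⟨r, hr⟩ := hd t ht
      exact ⟨r, hr⟩
    intro t; exact this trivial
  let eK : R ≃ₗ[R] LinearMap.range (Algebra.linearMap R K) :=
    LinearEquiv.ofInjective (Algebra.linearMap R K)
      (IsFractionRing.injective R K)
  let ψ : T →ₗ[R] R := eK.symm.toLinearMap.comp (g'.codRestrict _ hint)
  have hψ : ∀ t : T, algebraMap R K (ψ t) = g' t := by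
    intro t
    have h2 : (eK (ψ t) : K) = g' t := by
      show ((eK (eK.symm ⟨g' t, hint t⟩)) : K) = g' t
      rw [eK.apply_symm_apply]
    exact h2
  have hc : ψ (1 : T) ≠ 0 := by
    intro h0
    have := hψ 1
    rw [h0, map_zero] at this
    have hgd : g' (1 : T) = (d : R) • f (ι 1) := rfl
    rw [hgd] at this
    have hdK : algebraMap R K (d : R) ≠ 0 := by
      intro hh
      exact nonZeroDivisors.coe_ne_zero d (IsFractionRing.injective R K (by rw [hh, map_zero]))
    have : algebraMap R K (d : R) * f (ι 1) = 0 := by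
      rw [← Algebra.smul_def]; exact this.symm
    rcases mul_eq_zero.mp this with h1 | h2
    · exact hdK h1
    · exact hf h2
  -- Step 2: apply split-F-regularity to c := ψ 1.
  obtain ⟨e, he, φ, hφ, hφc⟩ := h (ψ 1) hc
  haveI : ExpChar T p := ExpChar.prime (Fact.out)
  refine ⟨{ toFun := fun x => φ (ψ (x ^ p ^ e)),
            map_add' := ?_, map_smul' := ?_ }, ?_⟩
  · intro x y
    show φ (ψ ((x + y) ^ p ^ e)) = φ (ψ (x ^ p ^ e)) + φ (ψ (y ^ p ^ e))
    rw [add_pow_char_pow, map_add, map_add]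
  · intro r x
    simp only [RingHom.id_apply]
    have h1 : (r • x) ^ p ^ e = (r ^ p ^ e) • x ^ p ^ e := by
      rw [smul_pow]
    show φ (ψ ((r • x) ^ p ^ e)) = r • φ (ψ (x ^ p ^ e))
    rw [h1, map_smul, smul_eq_mul, hφ, smul_eq_mul]
  · show φ (ψ ((1:T) ^ p ^ e)) = 1
    rw [one_pow, hφc]
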